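/- arXiv:0708.1558 — 8 statements merged into one kernel-verified Lean document; each statement's English description precedes it below -/
import Mathlib

section
/- Let Λ ⊆ GF(q^2) satisfy ((α−β)/(γ−β))^{q−1} ≠ 1 for all triples of distinct α, β, γ ∈ Λ. Then |Λ| ≤ q+1 if q is odd, and |Λ| ≤ q+2 if q is even. -/
open Polynomial Finset

/-- Key algebraic lemma: if `a^(q-1) = b^(q-1)` for nonzero distinct `a b`,
then `(a-b)^(q-1) = b^(q-1)`, given that `x ↦ x^q` is additive. -/
lemma arc_collinear_aux {F : Type} [Field F] {q : ℕ} (hq2 : 2 ≤ q)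
    (hhom : ∀ x y : F, (x - y) ^ q = x ^ q - y ^ q)
    {a b : F} (hb : b ≠ 0) (hab : a ≠ b)
    (h : a ^ (q - 1) = b ^ (q - 1)) :
    (a - b) ^ (q - 1) = b ^ (q - 1) := by
  have hq1 : q - 1 + 1 = q := by omega
  have hpow : ∀ x : F, x ^ q = x ^ (q - 1) * x := by
    intro x; rw [← pow_succ, hq1]
  have hab0 : a - b ≠ 0 := sub_ne_zero.mpr hab
  have key : (a - b) ^ (q - 1) * (a - b) = b ^ (q - 1) * (a - b) := by
    calc (a - b) ^ (q - 1) * (a - b) = (a - b) ^ q := (hpow _).symm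
    _ = a ^ q - b ^ q := hhom a b
    _ = a ^ (q - 1) * a - b ^ (q - 1) * b := by rw [hpow, hpow]
    _ = b ^ (q - 1) * (a - b) := by rw [h]; ring
  exact mul_right_cancel₀ hab0 key

/-- If `Λ ⊆ GF(q^2)` satisfies `((α-β)/(γ-β))^(q-1) ≠ 1` for all distinct triples, then
`|Λ| ≤ q+1` for `q` odd and `|Λ| ≤ q+2` for `q` even. -/
theorem arc_set_size_bound (q : ℕ) (hq : IsPrimePow q)
    (F : Type) [Field F] [Fintype F] (hF : Fintype.card F = q ^ 2)
    (Λ : Finset F)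
    (harc : ∀ α ∈ Λ, ∀ β ∈ Λ, ∀ γ ∈ Λ, α ≠ β → α ≠ γ → β ≠ γ →
      ((α - β) / (γ - β)) ^ (q - 1) ≠ 1) :
    (Odd q → Λ.card ≤ q + 1) ∧ (Even q → Λ.card ≤ q + 2) := by
  classical
  obtain ⟨p, k, hp, hk, hpk⟩ := hq
  have hp' : Nat.Prime p := hp.nat_prime
  have hq2 : 2 ≤ q := by
    calc 2 ≤ p := hp'.two_le
    _ ≤ p ^ k := Nat.le_self_pow (by omega) p
    _ = q := hpk
  -- the characteristic of F is p
  haveI : CharP F (ringChar F) := ringChar.charP F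
  obtain ⟨n, hc, hcard⟩ := FiniteField.card F (ringChar F)
  have hpc : p = ringChar F := by
    have h1 : p ∣ (ringChar F) ^ (n : ℕ) := by
      rw [← hcard, hF, ← hpk, ← pow_mul]
      exact dvd_pow_self p (by positivity)
    have := hp'.dvd_of_dvd_pow h1
    exact ((Nat.prime_dvd_prime_iff_eq hp' hc).mp this)
  haveI : Fact (Nat.Prime p) := ⟨hp'⟩
  haveI : CharP F p := by rw [hpc]; infer_instance
  have hhom : ∀ x y : F, (x - y) ^ q = x ^ q - y ^ q := by
    intro x y
    rw [← hpk]
    exact sub_pow_char_pow x y k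
  -- restated arc condition
  have harc' : ∀ α ∈ Λ, ∀ β ∈ Λ, ∀ γ ∈ Λ, α ≠ β → α ≠ γ → β ≠ γ →
      (α - β) ^ (q - 1) ≠ (γ - β) ^ (q - 1) := by
    intro α hα β hβ γ hγ h1 h2 h3 h
    apply harc α hα β hβ γ hγ h1 h2 h3
    rw [div_pow, h, div_self (pow_ne_zero _ (sub_ne_zero.mpr h3.symm))]
  -- arithmetic : (q-1)*(q+1) = q^2 - 1
  have harith : (q - 1) * (q + 1) = q ^ 2 - 1 := by
    have h1 : 1 ≤ q := by omega
    have h2 : 1 ≤ q ^ 2 := Nat.one_le_pow _ _ (by omega)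
    zify [h1, h2]
    ring
  have hpowT : ∀ x : F, x ≠ 0 → (x ^ (q - 1)) ^ (q + 1) = 1 := by
    intro x hx
    rw [← pow_mul, harith, ← hF]
    exact FiniteField.pow_card_sub_one_eq_one x hx
  -- the set of (q+1)-st roots of unity
  set T : Finset F := Finset.univ.filter (fun v => v ^ (q + 1) = 1) with hT
  have hTcard : T.card ≤ q + 1 := by
    have h1 : T ⊆ (Polynomial.nthRoots (q + 1) (1 : F)).toFinset := by
      intro v hv
      rw [Multiset.mem_toFinset, Polynomial.mem_nthRoots (by omega : 0 < q + 1)]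
      simpa [hT] using hv
    calc T.card ≤ _ := Finset.card_le_card h1
    _ ≤ Multiset.card (nthRoots (q + 1) (1 : F)) := Multiset.toFinset_card_le _
    _ ≤ q + 1 := Polynomial.card_nthRoots _ _
  -- the direction maps
  have hinj : ∀ β ∈ Λ,
      ((Λ.erase β).image (fun α => (α - β) ^ (q - 1))).card = Λ.card - 1 := by
    intro β hβ
    rw [Finset.card_image_of_injOn, Finset.card_erase_of_mem hβ]
    intro α hα γ hγ h
    by_contra hne
    exact harc' α (Finset.mem_of_mem_erase hα) β hβ γ (Finset.mem_of_mem_erase hγ)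
      (Finset.ne_of_mem_erase hα) hne (Finset.ne_of_mem_erase hγ).symm h
  have hsub : ∀ β ∈ Λ,
      (Λ.erase β).image (fun α => (α - β) ^ (q - 1)) ⊆ T := by
    intro β hβ v hv
    obtain ⟨α, hα, rfl⟩ := Finset.mem_image.mp hv
    simp only [hT, Finset.mem_filter, Finset.mem_univ, true_and]
    exact hpowT _ (sub_ne_zero.mpr (Finset.ne_of_mem_erase hα))
  -- the q+2 bound
  have hbound : Λ.card ≤ q + 2 := by
    rcases Finset.eq_empty_or_nonempty Λ with h | ⟨β, hβ⟩
    · simp [h]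
    · have h1 : Λ.card - 1 ≤ q + 1 := by
        rw [← hinj β hβ]
        exact le_trans (Finset.card_le_card (hsub β hβ)) hTcard
      omega
  refine ⟨?_, fun _ => hbound⟩
  intro hodd
  by_contra hlt
  have hcardΛ : Λ.card = q + 2 := by omega
  -- every direction map is surjective onto T
  have hsurj : ∀ β ∈ Λ, (Λ.erase β).image (fun α => (α - β) ^ (q - 1)) = T := by
    intro β hβ
    apply Finset.eq_of_subset_of_card_le (hsub β hβ)
    rw [hinj β hβ, hcardΛ]
    omega
  -- there is a point outside Λ
  have hq3 : 3 ≤ q := by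
    rcases hodd with ⟨m, hm⟩; omega
  obtain ⟨P, hP⟩ : ∃ P : F, P ∉ Λ := by
    by_contra h
    push_neg at h
    have : Λ = Finset.univ := Finset.eq_univ_iff_forall.mpr h
    have h2 : Fintype.card F = q + 2 := by rw [← hcardΛ, this, Finset.card_univ]
    have h3 : q * q ≥ 3 * q := Nat.mul_le_mul_right q hq3
    rw [hF] at h2
    have : q ^ 2 = q * q := sq q
    omega
  -- fibers of the direction map from P
  set f : F → F := fun α => (α - P) ^ (q - 1) with hfdef
  have hf : ∀ x, f x = (x - P) ^ (q - 1) := fun _ => rfl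
  have hfib : ∀ v ∈ Λ.image f, (Λ.filter (fun α => f α = v)).card = 2 := by
    intro v hv
    obtain ⟨α, hα, hαv⟩ := Finset.mem_image.mp hv
    have hαP : α ≠ P := fun h => hP (h ▸ hα)
    -- find a second point in the fiber
    have hPm : (P - α) ^ (q - 1) ∈ T := by
      simp only [hT, Finset.mem_filter, Finset.mem_univ, true_and]
      exact hpowT _ (sub_ne_zero.mpr (Ne.symm hαP))
    rw [← hsurj α hα] at hPm
    obtain ⟨γ, hγ, hγeq⟩ := Finset.mem_image.mp hPm
    have hγΛ : γ ∈ Λ := Finset.mem_of_mem_erase hγ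
    have hγα : γ ≠ α := Finset.ne_of_mem_erase hγ
    have hγP : γ ≠ P := fun h => hP (h ▸ hγΛ)
    have hneg : (P - α) ^ (q - 1) = (α - P) ^ (q - 1) := by
      have heven : Even (q - 1) := by
        rcases hodd with ⟨m, hm⟩
        exact ⟨m, by omega⟩
      rw [show P - α = -(α - P) by ring, heven.neg_pow]
    have hγfib : f γ = v := by
      have h1 : (γ - α - (P - α)) ^ (q - 1) = (P - α) ^ (q - 1) :=
        arc_collinear_aux hq2 hhom (sub_ne_zero.mpr hαP.symm)
          (fun h => hγP (by linear_combination h)) hγeq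
      rw [show γ - α - (P - α) = γ - P by ring] at h1
      rw [hf, h1, hneg, ← hf α, hαv]
    -- fiber has at least two elements
    have hαfib : α ∈ Λ.filter (fun α => f α = v) := Finset.mem_filter.mpr ⟨hα, hαv⟩
    have hγfib' : γ ∈ Λ.filter (fun α => f α = v) := Finset.mem_filter.mpr ⟨hγΛ, hγfib⟩
    have hge : 2 ≤ (Λ.filter (fun α => f α = v)).card :=
      Finset.one_lt_card.mpr ⟨γ, hγfib', α, hαfib, hγα⟩
    -- fiber has at most two elements
    have hle : (Λ.filter (fun α => f α = v)).card ≤ 2 := by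
      by_contra h
      push_neg at h
      obtain ⟨a, b, c, ha, hb, hc, hab, hac, hbc⟩ := Finset.two_lt_card_iff.mp h
      obtain ⟨haΛ, hafv⟩ := Finset.mem_filter.mp ha
      obtain ⟨hbΛ, hbfv⟩ := Finset.mem_filter.mp hb
      obtain ⟨hcΛ, hcfv⟩ := Finset.mem_filter.mp hc
      have hbP : b ≠ P := fun h => hP (h ▸ hbΛ)
      have h1 : (a - P - (b - P)) ^ (q - 1) = (b - P) ^ (q - 1) :=
        arc_collinear_aux hq2 hhom (sub_ne_zero.mpr hbP)
          (fun h => hab (by linear_combination h)) (by rw [← hf, ← hf, hafv, hbfv])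
      have h2 : (c - P - (b - P)) ^ (q - 1) = (b - P) ^ (q - 1) :=
        arc_collinear_aux hq2 hhom (sub_ne_zero.mpr hbP)
          (fun h => hbc.symm (by linear_combination h)) (by rw [← hf, ← hf, hcfv, hbfv])
      rw [show a - P - (b - P) = a - b by ring] at h1
      rw [show c - P - (b - P) = c - b by ring] at h2
      exact harc' a haΛ b hbΛ c hcΛ hab hac hbc (h1.trans h2.symm)
    omega
  -- Λ.card is even, contradiction
  have hsum : Λ.card = ∑ v ∈ Λ.image f, (Λ.filter (fun α => f α = v)).card :=
    Finset.card_eq_sum_card_image f Λ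
  have heven : Λ.card = 2 * (Λ.image f).card := by
    rw [hsum, Finset.sum_congr rfl hfib, Finset.sum_const, smul_eq_mul, mul_comm]
  rcases hodd with ⟨m, hm⟩
  omega
end

section
/- For λ ∈ GF(q^2), define F_λ(x,y) = x^{q+1} + y^q + y + λ^q x^q + λ x ∈ GF(q). Let S be a transversal of T_0 = {y : y^q+y=0} in GF(q^2) and Ω = GF(q^2) × S. Let Λ ⊆ GF(q^2) satisfy the arc condition ((α−β)/(γ−β))^{q−1} ≠ 1 for distinct α,β,γ ∈ Λ, with |Λ| ≥ 3. Then the evaluation map Ω → GF(q)^Λ sending (x,y) to (F_λ(x,y))_{λ∈Λ} is injective. -/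
/-- The Hermitian form `F_λ(x,y) = x^(q+1) + y^q + y + λ^q x^q + λ x`. -/
def Fl (q : ℕ) {F : Type*} [Field F] (l x y : F) : F :=
  x ^ (q + 1) + y ^ q + y + l ^ q * x ^ q + l * x

/-- The evaluation map `Ω → GF(q)^Λ`, `(x,y) ↦ (F_λ(x,y))_{λ∈Λ}`, is injective, where
`Ω = GF(q^2) × S` and `S` is a transversal of the trace-zero subgroup `T₀`. -/
theorem evaluation_injective (q : ℕ) (hq : IsPrimePow q)
    (F : Type) [Field F] [Fintype F] (hF : Fintype.card F = q ^ 2)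
    (S : Set F) (hS : ∀ z : F, ∃! s : F, s ∈ S ∧ (z - s) ^ q + (z - s) = 0)
    (Λ : Finset F) (hΛ : 3 ≤ Λ.card)
    (harc : ∀ α ∈ Λ, ∀ β ∈ Λ, ∀ γ ∈ Λ, α ≠ β → α ≠ γ → β ≠ γ →
      ((α - β) / (γ - β)) ^ (q - 1) ≠ 1) :
    ∀ x₀ y₀ x₁ y₁ : F, y₀ ∈ S → y₁ ∈ S →
      (∀ l ∈ Λ, Fl q l x₀ y₀ = Fl q l x₁ y₁) → x₀ = x₁ ∧ y₀ = y₁ := by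
  intro x₀ y₀ x₁ y₁ hy₀ hy₁ h
  classical
  obtain ⟨p, k, hp, hk, hpk⟩ := hq
  have hp' : p.Prime := hp.nat_prime
  have hq1 : 1 ≤ q := le_trans (by norm_num) (hpk ▸ Nat.one_le_two_pow.trans
    (Nat.pow_le_pow_left hp'.two_le k))
  -- characteristic
  have hchar : CharP F (ringChar F) := ringChar.charP F
  have hrp : (ringChar F).Prime := CharP.char_is_prime F (ringChar F)
  haveI := Fact.mk hrp
  obtain ⟨n, -, hcard⟩ := FiniteField.card F (ringChar F)
  have hrpe : ringChar F = p := by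
    have h1 : (ringChar F) ∣ p ^ (k * 2) := by
      rw [pow_mul, hpk, ← hF, hcard]
      exact dvd_pow_self _ n.pos.ne'
    exact (Nat.prime_dvd_prime_iff_eq hrp hp').mp (hrp.dvd_of_dvd_pow h1)
  rw [hrpe] at hchar
  haveI := hchar
  haveI := Fact.mk hp'
  have hfrob : ∀ a b : F, (a - b) ^ q = a ^ q - b ^ q := by
    intro a b; rw [← hpk]; exact sub_pow_char_pow a b k
  -- three distinct elements of Λ
  obtain ⟨α, hα⟩ := Finset.card_pos.mp (show 0 < Λ.card by omega)
  obtain ⟨β, hβ⟩ := Finset.card_pos.mp (show 0 < (Λ.erase α).card by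
    rw [Finset.card_erase_of_mem hα]; omega)
  obtain ⟨γ, hγ⟩ := Finset.card_pos.mp (show 0 < ((Λ.erase α).erase β).card by
    rw [Finset.card_erase_of_mem hβ, Finset.card_erase_of_mem hα]; omega)
  have hβα : β ≠ α := Finset.ne_of_mem_erase hβ
  have hγβ : γ ≠ β := Finset.ne_of_mem_erase hγ
  have hγα : γ ≠ α := Finset.ne_of_mem_erase (Finset.mem_of_mem_erase hγ)
  have hβΛ : β ∈ Λ := Finset.mem_of_mem_erase hβ
  have hγΛ : γ ∈ Λ := Finset.mem_of_mem_erase (Finset.mem_of_mem_erase hγ)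
  -- key identity
  have key : ∀ l ∈ Λ, ∀ m ∈ Λ, ((l - m) * (x₀ - x₁)) ^ q + (l - m) * (x₀ - x₁) = 0 := by
    intro l hl m hm
    have h1 := h l hl
    have h2 := h m hm
    simp only [Fl] at h1 h2
    rw [mul_pow, hfrob, hfrob]
    linear_combination h1 - h2
  -- x₀ = x₁
  have hx : x₀ = x₁ := by
    by_contra hd
    have hd' : x₀ - x₁ ≠ 0 := sub_ne_zero.mpr hd
    have hpow : ∀ l ∈ Λ, l ≠ β → ((l - β) * (x₀ - x₁)) ^ (q - 1) = -1 := by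
      intro l hl hlβ
      have ht : ((l - β) * (x₀ - x₁)) ≠ 0 :=
        mul_ne_zero (sub_ne_zero.mpr hlβ) hd'
      have := key l hl β hβΛ
      have hq' : q - 1 + 1 = q := by omega
      rw [← hq', pow_succ] at this
      have : ((l - β) * (x₀ - x₁)) ^ (q - 1) * ((l - β) * (x₀ - x₁)) =
          (-1) * ((l - β) * (x₀ - x₁)) := by linear_combination this
      exact mul_right_cancel₀ ht this
    have h1 := hpow α hα (fun e => hβα e.symm)
    have h2 := hpow γ hγΛ hγβ
    apply harc α hα β hβΛ γ hγΛ (fun e => hβα e.symm) (fun e => hγα e.symm) (fun e => hγβ e.symm)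
    have hγβ' : (γ - β) * (x₀ - x₁) ≠ 0 := mul_ne_zero (sub_ne_zero.mpr hγβ) hd'
    have hne : ((γ - β) * (x₀ - x₁)) ^ (q - 1) ≠ 0 := pow_ne_zero _ hγβ'
    have : ((α - β) / (γ - β)) = ((α - β) * (x₀ - x₁)) / ((γ - β) * (x₀ - x₁)) := by
      rw [mul_div_mul_right _ _ hd']
    rw [this, div_pow, h1, h2, neg_div_neg_eq]
    exact div_self one_ne_zero
  subst hx
  refine ⟨rfl, ?_⟩
  -- y₀ = y₁
  have h1 := h α hα
  simp only [Fl] at h1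
  have htr : (y₀ - y₁) ^ q + (y₀ - y₁) = 0 := by
    rw [hfrob]; linear_combination h1
  obtain ⟨s, -, hu⟩ := hS y₀
  have e1 : y₀ = s := hu y₀ ⟨hy₀, by simp [zero_pow (by omega : q ≠ 0)]⟩
  have e2 : y₁ = s := hu y₁ ⟨hy₁, htr⟩
  rw [e1, e2]
end

section
/- Let α, β, γ be distinct elements of GF(q^2) with ((α−β)/(γ−β))^{q−1} ≠ 1. Then the only solution (U,V,W) ∈ GF(q^2)^3 of the linear system U + α^q V + α W = 0, U + β^q V + β W = 0, U + γ^q V + γ W = 0 is U = V = W = 0. -/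
/-- For distinct `α, β, γ ∈ GF(q^2)` with `((α-β)/(γ-β))^(q-1) ≠ 1`, the only solution of
the system `U + α^q V + α W = 0`, `U + β^q V + β W = 0`, `U + γ^q V + γ W = 0` is
`U = V = W = 0`. -/
theorem linear_system_trivial_solution (q : ℕ) (hq : IsPrimePow q)
    (F : Type) [Field F] [Fintype F] (hF : Fintype.card F = q ^ 2)
    (α β γ : F) (hαβ : α ≠ β) (hαγ : α ≠ γ) (hβγ : β ≠ γ)
    (harc : ((α - β) / (γ - β)) ^ (q - 1) ≠ 1)
    (U V W : F)
    (h1 : U + α ^ q * V + α * W = 0)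
    (h2 : U + β ^ q * V + β * W = 0)
    (h3 : U + γ ^ q * V + γ * W = 0) :
    U = 0 ∧ V = 0 ∧ W = 0 := by
  obtain ⟨r, k, hr, hk, rfl⟩ := hq
  have hr' : r.Prime := hr.nat_prime
  set p := ringChar F with hpdef
  haveI : CharP F p := ringChar.charP F
  have hp : p.Prime := CharP.char_is_prime F p
  haveI : Fact p.Prime := ⟨hp⟩
  obtain ⟨n, hn, hcard⟩ := FiniteField.card F p
  -- p ^ n = r ^ (2k), so p = r
  have hpr : p = r := by
    have h1 : p ∣ (r ^ k) ^ 2 := by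
      rw [← hF, hcard]
      exact dvd_pow_self p n.pos.ne'
    have := hp.dvd_of_dvd_pow (hp.dvd_of_dvd_pow h1)
    exact ((Nat.prime_dvd_prime_iff_eq hp hr').mp this)
  have hfrob : ∀ a b : F, (a - b) ^ (r ^ k) = a ^ (r ^ k) - b ^ (r ^ k) := by
    intro a b
    rw [← hpr]
    exact sub_pow_char_pow a b k
  set Q := r ^ k with hQdef
  have hQ2 : 2 ≤ Q := by
    have : r ^ 1 ≤ r ^ k := Nat.pow_le_pow_right hr'.pos hk
    simpa using le_trans (by simpa using hr'.two_le) this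
  have hA : α - β ≠ 0 := sub_ne_zero.mpr hαβ
  have hC : γ - β ≠ 0 := sub_ne_zero.mpr hβγ.symm
  -- subtracted equations
  have e1 : (α - β) ^ Q * V + (α - β) * W = 0 := by
    rw [hfrob]; ring_nf; linear_combination h1 - h2
  have e2 : (γ - β) ^ Q * V + (γ - β) * W = 0 := by
    rw [hfrob]; ring_nf; linear_combination h3 - h2
  have hV : V = 0 := by
    by_contra hV
    apply harc
    have key0 : ((γ - β) * (α - β) ^ Q - (α - β) * (γ - β) ^ Q) * V = 0 := by
      linear_combination (γ - β) * e1 - (α - β) * e2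
    have key : (γ - β) * (α - β) ^ Q = (α - β) * (γ - β) ^ Q := by
      exact sub_eq_zero.mp ((mul_eq_zero.mp key0).resolve_right hV)
    set x : F := (α - β) / (γ - β) with hx
    have hx0 : x ≠ 0 := div_ne_zero hA hC
    have hxQ : x ^ Q = x := by
      rw [hx, div_pow, div_eq_div_iff (pow_ne_zero _ hC) hC]
      linear_combination key
    have : x ^ (Q - 1) * x = 1 * x := by
      rw [one_mul, ← pow_succ, Nat.sub_add_cancel (le_trans one_le_two hQ2), hxQ]
    exact mul_right_cancel₀ hx0 this
  have hW : W = 0 := by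
    have := e1
    rw [hV, mul_zero, zero_add] at this
    exact (mul_eq_zero.mp this).resolve_left hA
  refine ⟨?_, hV, hW⟩
  have := h1
  rw [hV, hW, mul_zero, mul_zero, add_zero, add_zero] at this
  exact this
end

section
/- Let α, β, γ be distinct elements of GF(q^2) with ((α−β)/(γ−β))^{q−1} ≠ 1, and let F_λ(x,y) = x^{q+1} + y^q + y + λ^q x^q + λ x. If (x,y) ∈ GF(q^2)^2 satisfies F_α(x,y) = F_β(x,y) = F_γ(x,y) = 0, then x = 0 and y^q + y = 0. -/
/-- For distinct `α, β, γ` with `((α-β)/(γ-β))^(q-1) ≠ 1`, any common zero `(x,y)` of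
`F_α, F_β, F_γ` has `x = 0` and `y^q + y = 0`. -/
theorem common_zero_of_three_forms (q : ℕ) (hq : IsPrimePow q)
    (F : Type) [Field F] [Fintype F] (hF : Fintype.card F = q ^ 2)
    (α β γ : F) (hαβ : α ≠ β) (hαγ : α ≠ γ) (hβγ : β ≠ γ)
    (harc : ((α - β) / (γ - β)) ^ (q - 1) ≠ 1)
    (x y : F) (h1 : Fl q α x y = 0) (h2 : Fl q β x y = 0) (h3 : Fl q γ x y = 0) :
    x = 0 ∧ y ^ q + y = 0 := by
  obtain ⟨p, k, hp, hk, hpk⟩ := hq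
  have hp' : p.Prime := Nat.prime_iff.2 hp
  have hq1 : 1 ≤ q := by
    rw [← hpk]; exact Nat.one_le_pow _ _ hp'.pos
  -- characteristic of F is p
  obtain ⟨n, hrp, hcard⟩ := FiniteField.card F (ringChar F)
  haveI : CharP F (ringChar F) := ringChar.charP F
  have hcharp : ringChar F = p := by
    have hdvd : p ∣ ringChar F ^ (n : ℕ) := by
      rw [← hcard, hF, ← hpk, ← pow_mul]
      exact dvd_pow_self p (by positivity)
    exact ((Nat.prime_dvd_prime_iff_eq hp' hrp).1 (hp'.dvd_of_dvd_pow hdvd)).symm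
  haveI hcp : CharP F p := hcharp ▸ ringChar.charP F
  haveI : Fact p.Prime := ⟨hp'⟩
  have hfrob : ∀ a b : F, (a - b) ^ q = a ^ q - b ^ q := by
    intro a b
    rw [← hpk, sub_pow_char_pow]
  unfold Fl at h1 h2 h3
  have hx : x = 0 := by
    by_contra hx
    have key1 : ((α - β) * x) ^ q = -((α - β) * x) := by
      rw [mul_pow, hfrob]
      linear_combination h1 - h2
    have key2 : ((γ - β) * x) ^ q = -((γ - β) * x) := by
      rw [mul_pow, hfrob]
      linear_combination h3 - h2
    have hu : (α - β) * x ≠ 0 := mul_ne_zero (sub_ne_zero.2 hαβ) hx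
    have hv : (γ - β) * x ≠ 0 := mul_ne_zero (sub_ne_zero.2 hβγ.symm) hx
    set t : F := (α - β) / (γ - β) with ht
    have htval : t = ((α - β) * x) / ((γ - β) * x) := by
      rw [ht, mul_div_mul_right _ _ hx]
    have htq : t ^ q = t := by
      rw [htval, div_pow, key1, key2, neg_div_neg_eq]
    have htne : t ≠ 0 := by
      rw [htval]; exact div_ne_zero hu hv
    apply harc
    have : t ^ (q - 1) * t = 1 * t := by
      rw [← pow_succ, Nat.sub_add_cancel hq1, htq, one_mul]
    exact mul_right_cancel₀ htne this
  refine ⟨hx, ?_⟩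
  subst hx
  have h0 : (0 : F) ^ (q + 1) = 0 := zero_pow (by omega)
  have h0q : (0 : F) ^ q = 0 := zero_pow (by omega)
  rw [h0, h0q] at h1
  linear_combination h1
end

section
/- Let q be a prime power, S a transversal of T_0 = {y ∈ GF(q^2) : y^q + y = 0} in GF(q^2), Ω = GF(q^2) × S, and Λ = {λ₁, ..., λ_N} ⊆ GF(q^2) a set of N ≥ 3 elements satisfying ((α−β)/(γ−β))^{q−1} ≠ 1 for all distinct α, β, γ ∈ Λ. Define C = {(F_{λ₁}(x,y), ..., F_{λ_N}(x,y)) : (x,y) ∈ Ω} ⊆ GF(q)^N, where F_λ(x,y) = x^{q+1} + y^q + y + λ^q x^q + λ x. Then C is a GF(q)-linear subspace of GF(q)^N of dimension 3. -/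
set_option synthInstance.maxHeartbeats 400000
set_option maxHeartbeats 1000000

open Polynomial in
/-- A set of the form `{x | x^q + c x = 0}` in a field has at most `q` elements. -/
lemma aux_card_roots {F : Type*} [Field F] [Fintype F] [DecidableEq F] (q : ℕ) (hq : 2 ≤ q)
    (c : F) : (Finset.univ.filter (fun x : F => x ^ q + c * x = 0)).card ≤ q := by
  set P : F[X] := X ^ q + C c * X with hP
  have hdeg : P.natDegree = q := by
    rw [hP, natDegree_add_eq_left_of_natDegree_lt, natDegree_X_pow]
    rw [natDegree_X_pow]
    calc (C c * X).natDegree ≤ 1 := by simpa using natDegree_C_mul_le c X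
    _ < q := hq
  have hP0 : P ≠ 0 := by
    intro h
    rw [h, natDegree_zero] at hdeg
    omega
  have hsub : (Finset.univ.filter (fun x : F => x ^ q + c * x = 0)) ⊆ P.roots.toFinset := by
    intro x hx
    simp only [Finset.mem_filter] at hx
    rw [Multiset.mem_toFinset, mem_roots hP0]
    simp [P, IsRoot, hx.2]
  calc (Finset.univ.filter (fun x : F => x ^ q + c * x = 0)).card
      ≤ P.roots.toFinset.card := Finset.card_le_card hsub
    _ ≤ Multiset.card P.roots := P.roots.toFinset_card_le
    _ ≤ P.natDegree := P.card_roots'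
    _ = q := hdeg

/-- The code `C = {(F_λ(x,y))_{λ∈Λ} : (x,y) ∈ Ω}` is a `GF(q)`-linear subspace of
`GF(q)^N` of dimension `3`, where `GF(q)` is the subfield `K` of `F = GF(q^2)` fixed by
`x ↦ x^q`, `S` is a transversal of `T₀` and `Ω = GF(q^2) × S`. -/
theorem code_is_three_dimensional (q : ℕ) (hq : IsPrimePow q)
    (F : Type) [Field F] [Fintype F] (hF : Fintype.card F = q ^ 2)
    (K : Subfield F) (hK : ∀ x : F, x ∈ K ↔ x ^ q = x)
    (S : Set F) (hS : ∀ z : F, ∃! s : F, s ∈ S ∧ (z - s) ^ q + (z - s) = 0)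
    (Λ : Finset F) (hΛ : 3 ≤ Λ.card)
    (harc : ∀ α ∈ Λ, ∀ β ∈ Λ, ∀ γ ∈ Λ, α ≠ β → α ≠ γ → β ≠ γ →
      ((α - β) / (γ - β)) ^ (q - 1) ≠ 1) :
    ∃ V : Submodule ↥K ({l : F // l ∈ Λ} → ↥K),
      (V : Set ({l : F // l ∈ Λ} → ↥K)) =
        {c | ∃ x y : F, y ∈ S ∧ ∀ l : {l : F // l ∈ Λ}, (c l : F) = Fl q l.1 x y} ∧
      Module.finrank ↥K ↥V = 3 := by
  classical
  -- basic facts about q and the characteristic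
  obtain ⟨p, k, pp', hk, hpk⟩ := hq
  have pp : Nat.Prime p := Nat.prime_iff.mpr pp'
  haveI : Fact p.Prime := ⟨pp⟩
  have hq2 : 2 ≤ q := by
    rw [← hpk]
    calc 2 ≤ p := pp.two_le
    _ = p ^ 1 := (pow_one p).symm
    _ ≤ p ^ k := Nat.pow_le_pow_right pp.pos hk
  haveI : CharP F (ringChar F) := ringChar.charP F
  obtain ⟨n, pp2, hcard⟩ := FiniteField.card F (ringChar F)
  have hchar : ringChar F = p := by
    have h1 : ringChar F ∣ q ^ 2 := by
      rw [← hF, hcard]; exact dvd_pow_self _ n.pos.ne'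
    rw [← hpk, ← pow_mul] at h1
    exact (Nat.prime_dvd_prime_iff_eq pp2 pp).mp (pp2.dvd_of_dvd_pow h1)
  haveI hcharF : CharP F p := hchar ▸ ringChar.charP F
  -- Frobenius x ↦ x^q is additive
  have frob_add : ∀ x y : F, (x + y) ^ q = x ^ q + y ^ q := by
    intro x y
    rw [← hpk]
    exact add_pow_char_pow x y p k
  have frob_neg : ∀ x : F, (-x) ^ q = -(x ^ q) := by
    intro x
    have h := frob_add x (-x)
    simp only [add_neg_cancel] at h
    rw [zero_pow (by omega)] at h
    linear_combination -h
  have frob_sub : ∀ x y : F, (x - y) ^ q = x ^ q - y ^ q := by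
    intro x y
    rw [sub_eq_add_neg, frob_add, frob_neg, sub_eq_add_neg]
  have pow_card2 : ∀ x : F, x ^ q ^ 2 = x := by
    intro x; rw [← hF]; exact FiniteField.pow_card x
  have frob_frob : ∀ x : F, (x ^ q) ^ q = x := by
    intro x; rw [← pow_mul, ← sq, pow_card2]
  -- the trace map
  set Tr : F → F := fun z => z ^ q + z with hTrdef
  have tr_mem : ∀ z : F, Tr z ∈ K := by
    intro z
    rw [hK]
    simp only [Tr, frob_add, frob_frob]
    ring
  have tr_sub : ∀ a b : F, Tr (a - b) = Tr a - Tr b := by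
    intro a b; simp only [Tr, frob_sub]; ring
  have tr_smul : ∀ c ∈ K, ∀ x : F, Tr (c * x) = c * Tr x := by
    intro c hc x
    simp only [Tr, mul_pow, (hK c).mp hc]
    ring
  have norm_mem : ∀ x : F, x ^ (q + 1) ∈ K := by
    intro x
    rw [hK, ← pow_mul]
    have h : (q + 1) * q = q ^ 2 + q := by ring
    rw [h, pow_add, pow_card2, pow_add, pow_one, mul_comm]
  -- cardinality of K is exactly q
  have cardK_eq_filter : Fintype.card ↥K = (Finset.univ.filter (fun x : F => x ∈ K)).card :=
    Fintype.card_subtype _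
  have cardK_le : Fintype.card ↥K ≤ q := by
    rw [cardK_eq_filter]
    have h : (Finset.univ.filter (fun x : F => x ∈ K))
        = (Finset.univ.filter (fun x : F => x ^ q + (-1) * x = 0)) := by
      apply Finset.filter_congr
      intro x _
      rw [hK]
      constructor
      · intro h; rw [h]; ring
      · intro h; linear_combination h
    rw [h]
    exact aux_card_roots q hq2 (-1)
  have cardK_ge : q ≤ Fintype.card ↥K := by
    set g : F → F := fun x => x ^ q - x with hg
    have key : Fintype.card F ≤ Fintype.card ↥K * (Finset.univ.image g).card := by
      rw [← Finset.card_univ (α := F)]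
      apply Finset.card_le_mul_card_image
      intro a ha
      obtain ⟨x₀, -, hx₀⟩ := Finset.mem_image.mp ha
      rw [cardK_eq_filter]
      apply Finset.card_le_card_of_injOn (fun x => x - x₀)
      · intro x hx
        simp only [Finset.mem_coe, Finset.mem_filter, Finset.mem_univ, true_and] at hx ⊢
        have hgx : g x = g x₀ := by rw [hx₀]; exact hx
        simp only [g] at hgx
        rw [hK, frob_sub]
        linear_combination hgx
      · intro x _ y _ hxy
        simpa using hxy
    have himg : (Finset.univ.image g).card ≤ q := by
      refine le_trans (Finset.card_le_card ?_) (aux_card_roots q hq2 1)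
      intro a ha
      obtain ⟨x, -, rfl⟩ := Finset.mem_image.mp ha
      simp only [Finset.mem_filter, Finset.mem_univ, true_and, one_mul, g]
      rw [frob_sub, frob_frob]
      ring
    have h1 := le_trans key (Nat.mul_le_mul_left _ himg)
    rw [hF, pow_two] at h1
    exact Nat.le_of_mul_le_mul_right h1 (by omega)
  have cardK : Fintype.card ↥K = q := le_antisymm cardK_le cardK_ge
  -- the trace is surjective onto K
  have tr_surj : ∀ t ∈ K, ∃ z : F, Tr z = t := by
    have hex : ∃ z : F, Tr z ≠ 0 := by
      by_contra hcon
      push_neg at hcon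
      have hall : (Finset.univ.filter (fun x : F => x ^ q + 1 * x = 0)) = Finset.univ := by
        ext x
        simp only [Finset.mem_filter, Finset.mem_univ, true_and, iff_true, one_mul]
        exact hcon x
      have h2 := aux_card_roots q hq2 (1 : F)
      rw [hall, Finset.card_univ, hF] at h2
      nlinarith
    intro t ht
    obtain ⟨z₀, hz₀⟩ := hex
    refine ⟨t / Tr z₀ * z₀, ?_⟩
    rw [tr_smul _ (K.div_mem ht (tr_mem z₀))]
    exact div_mul_cancel₀ t hz₀
  -- for every t in K there is y in S with y^q + y = t
  have S_surj : ∀ t ∈ K, ∃ y ∈ S, y ^ q + y = t := by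
    intro t ht
    obtain ⟨z, hz⟩ := tr_surj t ht
    obtain ⟨s, ⟨hsS, hs0⟩, -⟩ := hS z
    refine ⟨s, hsS, ?_⟩
    have h1 : Tr (z - s) = 0 := hs0
    rw [tr_sub, hz] at h1
    have : Tr s = t := by linear_combination -h1
    exact this
  -- the evaluation linear map
  let φ : (F × ↥K) →ₗ[↥K] ({l : F // l ∈ Λ} → ↥K) :=
    { toFun := fun zu l => ⟨Tr (l.1 * zu.1), tr_mem _⟩ + zu.2
      map_add' := by
        intro a b
        funext l
        apply Subtype.ext
        simp only [Pi.add_apply, Prod.fst_add, Prod.snd_add]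
        push_cast
        simp only [Tr, mul_add, frob_add, mul_pow]
        ring
      map_smul' := by
        intro c a
        funext l
        apply Subtype.ext
        simp only [Pi.smul_apply, RingHom.id_apply, Prod.smul_fst, Prod.smul_snd,
          smul_eq_mul]
        push_cast
        rw [show (c • a.1 : F) = (c : F) * a.1 from rfl,
          show l.1 * ((c : F) * a.1) = (c : F) * (l.1 * a.1) by ring, tr_smul _ c.2]
        ring }
  have φ_apply : ∀ zu : F × ↥K, ∀ l : {l : F // l ∈ Λ},
      ((φ zu l : ↥K) : F) = Tr (l.1 * zu.1) + (zu.2 : F) := fun _ _ => rfl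
  -- injectivity
  have hker : ∀ m : F × ↥K, φ m = 0 → m = 0 := by
    rintro ⟨z, u⟩ h0
    have hl : ∀ l ∈ Λ, Tr (l * z) + (u : F) = 0 := by
      intro l hlmem
      have h1 := congrArg Subtype.val (congrFun h0 ⟨l, hlmem⟩)
      rw [φ_apply] at h1
      simpa using h1
    obtain ⟨α, hα⟩ := Finset.card_pos.mp (show 0 < Λ.card by omega)
    obtain ⟨β, hβ, hβα⟩ := Finset.exists_mem_ne (s := Λ) (by omega) α
    have hγex : 0 < (Λ \ {α, β}).card := by
      have h1 := Finset.le_card_sdiff ({α, β} : Finset F) Λ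
      have h2 : ({α, β} : Finset F).card ≤ 2 := by
        have h3 := Finset.card_insert_le α ({β} : Finset F)
        simp only [Finset.card_singleton] at h3
        omega
      omega
    obtain ⟨γ, hγ⟩ := Finset.card_pos.mp hγex
    simp only [Finset.mem_sdiff, Finset.mem_insert, Finset.mem_singleton, not_or] at hγ
    obtain ⟨hγΛ, hγα, hγβ⟩ := hγ
    have hz : z = 0 := by
      by_contra hz0
      have e1 := hl α hα
      have e2 := hl β hβ
      have e3 := hl γ hγΛ
      have ta : Tr ((α - β) * z) = 0 := by
        rw [sub_mul, tr_sub]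
        linear_combination e1 - e2
      have tb : Tr ((γ - β) * z) = 0 := by
        rw [sub_mul, tr_sub]
        linear_combination e3 - e2
      have ha0 : (α - β) * z ≠ 0 := mul_ne_zero (sub_ne_zero.mpr hβα.symm) hz0
      have hb0 : (γ - β) * z ≠ 0 := mul_ne_zero (sub_ne_zero.mpr hγβ) hz0
      have haq : ((α - β) * z) ^ q = -((α - β) * z) := by
        simp only [Tr] at ta
        linear_combination ta
      have hbq : ((γ - β) * z) ^ q = -((γ - β) * z) := by
        simp only [Tr] at tb
        linear_combination tb
      have hr : ((α - β) * z / ((γ - β) * z)) ^ q = (α - β) * z / ((γ - β) * z) := by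
        rw [div_pow, haq, hbq, neg_div_neg_eq]
      have hrne : (α - β) * z / ((γ - β) * z) ≠ 0 := div_ne_zero ha0 hb0
      have hpow : ((α - β) * z / ((γ - β) * z)) ^ (q - 1) = 1 := by
        have h1 : ((α - β) * z / ((γ - β) * z)) ^ (q - 1) * ((α - β) * z / ((γ - β) * z))
            = 1 * ((α - β) * z / ((γ - β) * z)) := by
          rw [one_mul, ← pow_succ, show q - 1 + 1 = q by omega, hr]
        exact mul_right_cancel₀ hrne h1
      rw [mul_div_mul_right _ _ hz0] at hpow
      exact harc α hα β hβ γ hγΛ hβα.symm (Ne.symm hγα) (Ne.symm hγβ) hpow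
    subst hz
    have h1 := hl α hα
    have h2 : Tr 0 = 0 := by simp [Tr, zero_pow (show q ≠ 0 by omega)]
    rw [mul_zero, h2, zero_add] at h1
    have hu : u = 0 := Subtype.ext h1
    rw [hu]
    rfl
  have hinj : Function.Injective φ :=
    LinearMap.ker_eq_bot.mp (LinearMap.ker_eq_bot'.mpr hker)
  refine ⟨LinearMap.range φ, ?_, ?_⟩
  · ext c
    simp only [SetLike.mem_coe, LinearMap.mem_range, Set.mem_setOf_eq]
    constructor
    · rintro ⟨⟨z, u⟩, rfl⟩
      have ht : (u : F) - z ^ (q + 1) ∈ K := K.sub_mem u.2 (norm_mem z)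
      obtain ⟨y, hyS, hyt⟩ := S_surj _ ht
      refine ⟨z, y, hyS, fun l => ?_⟩
      rw [φ_apply]
      simp only [Fl, Tr, mul_pow]
      linear_combination -hyt
    · rintro ⟨x, y, hyS, hc⟩
      refine ⟨(x, ⟨x ^ (q + 1) + (y ^ q + y), K.add_mem (norm_mem x) (tr_mem y)⟩), ?_⟩
      funext l
      apply Subtype.ext
      rw [φ_apply, hc l]
      simp only [Fl, Tr, mul_pow]
      ring
  · rw [LinearMap.finrank_range_of_inj hinj]
    have hFfin : Module.finrank ↥K F = 2 := by
      have hc2 : Fintype.card F = Fintype.card ↥K ^ Module.finrank ↥K F :=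
        Module.card_eq_pow_finrank
      rw [hF, cardK] at hc2
      exact Nat.pow_right_injective hq2 hc2.symm
    rw [Module.finrank_prod, hFfin, Module.finrank_self]
end

section
/- With notation as in the construction (Λ of size N ≥ 3 satisfying the arc condition, S a transversal of T_0, Ω = GF(q^2) × S), the code C = {(F_λ(x,y))_{λ∈Λ} : (x,y) ∈ Ω} ⊆ GF(q)^N has minimum Hamming distance exactly N−2; that is, every nonzero codeword has at most 2 zero coordinates, and some nonzero codeword has exactly 2 zero coordinates. -/
namespace CodeMinDistAux

open Polynomial Finset

section Field
variable {F : Type*} [Field F]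

lemma Fl_sub (q : ℕ) (hfrob : ∀ a b : F, (a - b) ^ q = a ^ q - b ^ q) (l m x y : F) :
    Fl q l x y - Fl q m x y = ((l - m) * x) ^ q + (l - m) * x := by
  have h1 : ((l - m) * x) ^ q = (l ^ q - m ^ q) * x ^ q := by
    rw [mul_pow, hfrob]
  rw [h1, Fl, Fl]; ring

lemma three_zeros (q : ℕ) (hq1 : 1 ≤ q)
    (hfrob : ∀ a b : F, (a - b) ^ q = a ^ q - b ^ q)
    {x y α β γ : F} (hx : x ≠ 0)
    (hαβ : α ≠ β) (hβγ : β ≠ γ)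
    (h1 : Fl q α x y = 0) (h2 : Fl q β x y = 0) (h3 : Fl q γ x y = 0) :
    ((α - β) / (γ - β)) ^ (q - 1) = 1 := by
  set u := (α - β) * x with hu
  set v := (γ - β) * x with hv
  have hU : u ^ q + u = 0 := by
    rw [← Fl_sub q hfrob α β x y, h1, h2, sub_zero]
  have hV : v ^ q + v = 0 := by
    rw [← Fl_sub q hfrob γ β x y, h3, h2, sub_zero]
  have hαβ' : α - β ≠ 0 := sub_ne_zero.2 hαβ
  have hγβ' : γ - β ≠ 0 := sub_ne_zero.2 (Ne.symm hβγ)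
  have hune : u ≠ 0 := mul_ne_zero hαβ' hx
  have hvne : v ≠ 0 := mul_ne_zero hγβ' hx
  have key : ∀ w : F, w ≠ 0 → w ^ q + w = 0 → w ^ (q - 1) = -1 := by
    intro w hw hwe
    have : w ^ (q - 1) * w = (-1) * w := by
      rw [← pow_succ, Nat.sub_add_cancel hq1]
      linear_combination hwe
    exact mul_right_cancel₀ hw this
  have hdiv : (α - β) / (γ - β) = u / v := by
    rw [hu, hv, mul_div_mul_right _ _ hx]
  rw [hdiv, div_pow, key u hune hU, key v hvne hV, neg_div_neg_eq, div_one]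

variable [Fintype F] [DecidableEq F]

lemma filter_roots_card_le (P : Polynomial F) (hP : P ≠ 0) :
    (Finset.univ.filter fun z : F => P.eval z = 0).card ≤ P.natDegree := by
  have hsub : (Finset.univ.filter fun z : F => P.eval z = 0) ⊆ P.roots.toFinset := by
    intro z hz
    simp only [Finset.mem_filter] at hz
    rw [Multiset.mem_toFinset, Polynomial.mem_roots hP]
    exact hz.2
  calc (Finset.univ.filter fun z : F => P.eval z = 0).card
      ≤ P.roots.toFinset.card := Finset.card_le_card hsub
    _ ≤ Multiset.card P.roots := Multiset.toFinset_card_le _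
    _ ≤ P.natDegree := Polynomial.card_roots' P

lemma poly_filter_le (q : ℕ) (hq2 : 2 ≤ q) (Q : Polynomial F) (hQd : Q.degree ≤ 1)
    (pred : F → Prop) [DecidablePred pred] (hpred : ∀ z : F, pred z ↔ z ^ q + Q.eval z = 0) :
    (Finset.univ.filter pred).card ≤ q := by
  set P : Polynomial F := X ^ q + Q with hP
  have hd1 : Q.degree < (q : WithBot ℕ) := lt_of_le_of_lt hQd (by exact_mod_cast hq2)
  have hmon : P.Monic := monic_X_pow_add hd1
  have hP0 : P ≠ 0 := hmon.ne_zero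
  have hdeg : P.natDegree ≤ q := by
    apply le_trans (natDegree_add_le _ _)
    simp only [natDegree_X_pow, max_le_iff, le_refl, true_and]
    exact natDegree_le_of_degree_le hd1.le
  have hsame : (Finset.univ.filter pred) =
      (Finset.univ.filter fun z : F => P.eval z = 0) := by
    apply Finset.filter_congr
    intro z _
    rw [hP, hpred]
    simp
  rw [hsame]
  exact le_trans (filter_roots_card_le P hP0) hdeg

lemma fix_card_le (q : ℕ) (hq2 : 2 ≤ q) :
    (Finset.univ.filter fun z : F => z ^ q = z).card ≤ q := by
  apply poly_filter_le q hq2 (-X) (by rw [degree_neg]; exact degree_X_le)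
  intro z
  simp only [eval_neg, eval_X]
  constructor <;> intro h <;> linear_combination h

lemma fiber_card_le (q : ℕ) (hq2 : 2 ≤ q) (w : F) :
    (Finset.univ.filter fun z : F => z ^ q + z = w).card ≤ q := by
  apply poly_filter_le q hq2 (X - C w) (degree_X_sub_C_le w)
  intro z
  simp
  constructor <;> intro h <;> linear_combination h

lemma trace_main (q : ℕ) (hq2 : 2 ≤ q) (hF : Fintype.card F = q ^ 2)
    (hadd : ∀ a b : F, (a + b) ^ q = a ^ q + b ^ q)
    (hsub : ∀ a b : F, (a - b) ^ q = a ^ q - b ^ q)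
    (hpow : ∀ x : F, x ^ (q ^ 2) = x) :
    (∀ w : F, w ^ q = w → ∃ z : F, z ^ q + z = w) ∧ (∃ u : F, u ≠ 0 ∧ u ^ q + u = 0) := by
  set T : F → F := fun z => z ^ q + z with hT
  set img : Finset F := Finset.univ.image T with himg
  set Fix : Finset F := Finset.univ.filter (fun w : F => w ^ q = w) with hFix
  have himgFix : img ⊆ Fix := by
    intro w hw
    rw [himg, Finset.mem_image] at hw
    obtain ⟨z, _, rfl⟩ := hw
    rw [hFix, Finset.mem_filter]
    refine ⟨Finset.mem_univ _, ?_⟩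
    rw [hT]
    simp only
    rw [hadd, ← pow_mul, ← pow_two, hpow]
    ring
  have hcardsum : Fintype.card F = ∑ w ∈ img, (Finset.univ.filter fun z : F => T z = w).card := by
    rw [← Finset.card_univ]
    exact Finset.card_eq_sum_card_fiberwise
      (fun z _ => Finset.mem_image_of_mem T (Finset.mem_univ z))
  have hsumle : ∑ w ∈ img, (Finset.univ.filter fun z : F => T z = w).card ≤ img.card * q := by
    rw [← smul_eq_mul]
    apply Finset.sum_le_card_nsmul
    intro w _
    exact fiber_card_le q hq2 w
  have himgcard : q ≤ img.card := by
    have h1 : q * q ≤ img.card * q := by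
      calc q * q = q ^ 2 := (pow_two q).symm
        _ = Fintype.card F := hF.symm
        _ = _ := hcardsum
        _ ≤ img.card * q := hsumle
    exact Nat.le_of_mul_le_mul_right h1 (by omega)
  have hFixcard : Fix.card ≤ q := fix_card_le q hq2
  have heq : img = Fix := Finset.eq_of_subset_of_card_le himgFix (le_trans hFixcard himgcard)
  constructor
  · intro w hw
    have : w ∈ Fix := by rw [hFix, Finset.mem_filter]; exact ⟨Finset.mem_univ _, hw⟩
    rw [← heq, himg, Finset.mem_image] at this
    obtain ⟨z, _, hz⟩ := this
    exact ⟨z, hz⟩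
  · by_contra hcon
    push_neg at hcon
    have hinj : Function.Injective T := by
      intro a b hab
      by_contra hne
      have hd : a - b ≠ 0 := sub_ne_zero.2 hne
      have : (a - b) ^ q + (a - b) = 0 := by
        rw [hsub]
        rw [hT] at hab
        simp only at hab
        linear_combination hab
      exact (hcon (a - b) hd) this
    have h3 : img.card = q ^ 2 := by
      rw [himg, Finset.card_image_of_injective _ hinj, Finset.card_univ, hF]
    have h2 : img.card ≤ q := le_trans (Finset.card_le_card himgFix) hFixcard
    rw [h3] at h2
    nlinarith

end Field

end CodeMinDistAux

open CodeMinDistAux in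
open Classical in
/-- The code `C` has minimum distance exactly `N - 2`: every nonzero codeword
`(F_λ(x,y))_{λ∈Λ}` has at most `2` zero coordinates, and some nonzero codeword has
exactly `2` zero coordinates. -/
theorem code_min_distance (q : ℕ) (hq : IsPrimePow q)
    (F : Type) [Field F] [Fintype F] (hF : Fintype.card F = q ^ 2)
    (S : Set F) (hS : ∀ z : F, ∃! s : F, s ∈ S ∧ (z - s) ^ q + (z - s) = 0)
    (Λ : Finset F) (hΛ : 3 ≤ Λ.card)
    (harc : ∀ α ∈ Λ, ∀ β ∈ Λ, ∀ γ ∈ Λ, α ≠ β → α ≠ γ → β ≠ γ →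
      ((α - β) / (γ - β)) ^ (q - 1) ≠ 1) :
    (∀ x y : F, y ∈ S → (∃ l ∈ Λ, Fl q l x y ≠ 0) →
      (Finset.univ.filter fun l : (Λ : Type) => Fl q (l : F) x y = 0).card ≤ 2) ∧
    (∃ x y : F, y ∈ S ∧ (∃ l ∈ Λ, Fl q l x y ≠ 0) ∧
      (Finset.univ.filter fun l : (Λ : Type) => Fl q (l : F) x y = 0).card = 2) := by
  -- set up characteristic
  obtain ⟨p, k, hpP, hk, hpk⟩ := hq
  have hpp : Nat.Prime p := Nat.prime_iff.mpr hpP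
  obtain ⟨p', hcp'⟩ := CharP.exists F
  haveI := hcp'
  obtain ⟨n, hp', hcard⟩ := FiniteField.card F p'
  have hpeq : p = p' := by
    have hdvd : p ∣ p' ^ (n : ℕ) := by
      rw [← hcard, hF, ← hpk]
      exact dvd_pow (dvd_pow_self p hk.ne') two_ne_zero
    exact (Nat.prime_dvd_prime_iff_eq hpp hp').mp (hpp.dvd_of_dvd_pow hdvd)
  subst hpeq
  haveI : Fact p.Prime := ⟨hpp⟩
  have hq2 : 2 ≤ q := by
    calc 2 ≤ p := hpp.two_le
      _ ≤ p ^ k := Nat.le_self_pow hk.ne' p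
      _ = q := hpk
  have hq1 : 1 ≤ q := by omega
  have hadd : ∀ a b : F, (a + b) ^ q = a ^ q + b ^ q := by
    intro a b; rw [← hpk]; exact add_pow_char_pow a b p k
  have hsub : ∀ a b : F, (a - b) ^ q = a ^ q - b ^ q := by
    intro a b; rw [← hpk]; exact sub_pow_char_pow a b k
  have hpow : ∀ x : F, x ^ (q ^ 2) = x := by
    intro x; rw [← hF]; exact FiniteField.pow_card x
  letI : DecidableEq F := Classical.decEq F
  -- Part 1
  have part1 : ∀ x y : F, y ∈ S → (∃ l ∈ Λ, Fl q l x y ≠ 0) →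
      (Finset.univ.filter fun l : (Λ : Type) => Fl q (l : F) x y = 0).card ≤ 2 := by
    rintro x y _ ⟨l0, hl0, hne0⟩
    by_cases hx : x = 0
    · subst hx
      have hally : ∀ l : F, Fl q l 0 y = y ^ q + y := by
        intro l
        rw [Fl, zero_pow (by omega : q + 1 ≠ 0), zero_pow (by omega : q ≠ 0)]
        ring
      have : (Finset.univ.filter fun l : (Λ : Type) => Fl q (l : F) 0 y = 0) = ∅ := by
        rw [Finset.filter_eq_empty_iff]
        intro l _
        rw [hally]
        rw [hally l0] at hne0
        exact hne0
      rw [this]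
      simp
    · by_contra hcon
      push_neg at hcon
      rw [Finset.two_lt_card] at hcon
      obtain ⟨a, ha, b, hb, c, hc, hab, hac, hbc⟩ := hcon
      rw [Finset.mem_filter] at ha hb hc
      have hab' : (a : F) ≠ (b : F) := fun h => hab (Subtype.ext h)
      have hac' : (a : F) ≠ (c : F) := fun h => hac (Subtype.ext h)
      have hbc' : (b : F) ≠ (c : F) := fun h => hbc (Subtype.ext h)
      exact harc (a : F) a.2 (b : F) b.2 (c : F) c.2 hab' hac' hbc'
        (three_zeros q hq1 hsub hx hab' hbc' ha.2 hb.2 hc.2)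
  refine ⟨part1, ?_⟩
  -- Part 2
  obtain ⟨α, hα, β, hβ, γ, hγ, hαβ, hαγ, hβγ⟩ := (Finset.two_lt_card (s := Λ)).mp (by omega)
  obtain ⟨hsurj, u, hu0, huK⟩ := trace_main q hq2 hF hadd hsub hpow
  have hαβ' : α - β ≠ 0 := sub_ne_zero.2 hαβ
  set x : F := u / (α - β) with hxdef
  have hx : x ≠ 0 := div_ne_zero hu0 hαβ'
  have hux : (α - β) * x = u := by
    rw [hxdef, mul_comm, div_mul_cancel₀ u hαβ']
  have hcq : (x ^ (q + 1) + α ^ q * x ^ q + α * x) ^ q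
      = x ^ (q + 1) + α ^ q * x ^ q + α * x := by
    have e1 : (x ^ (q + 1)) ^ q = x ^ (q + 1) := by
      rw [← pow_mul]
      have h : (q + 1) * q = q ^ 2 + q := by ring
      rw [h, pow_add, hpow, pow_succ]
      ring
    have e2 : (α ^ q * x ^ q) ^ q = α * x := by
      rw [mul_pow, ← pow_mul, ← pow_mul, ← pow_two, hpow, hpow]
    rw [hadd, hadd, e1, e2, mul_pow]
    ring
  have hnegc : (-(x ^ (q + 1) + α ^ q * x ^ q + α * x)) ^ q
      = -(x ^ (q + 1) + α ^ q * x ^ q + α * x) := by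
    have h := hsub 0 (x ^ (q + 1) + α ^ q * x ^ q + α * x)
    rw [zero_sub, zero_pow (by omega : q ≠ 0), zero_sub, hcq] at h
    exact h
  obtain ⟨z, hz⟩ := hsurj _ hnegc
  obtain ⟨s, ⟨hsS, hstr⟩, -⟩ := hS z
  have hsy : s ^ q + s = -(x ^ (q + 1) + α ^ q * x ^ q + α * x) := by
    rw [hsub] at hstr
    linear_combination hz - hstr
  have hFα : Fl q α x s = 0 := by
    rw [Fl]
    linear_combination hsy
  have hFβ : Fl q β x s = 0 := by
    have hdiff := Fl_sub q hsub α β x s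
    rw [hFα, hux, huK] at hdiff
    linear_combination -hdiff
  refine ⟨x, s, hsS, ⟨γ, hγ, ?_⟩, ?_⟩
  · intro h
    exact harc α hα β hβ γ hγ hαβ hαγ hβγ (three_zeros q hq1 hsub hx hαβ hβγ hFα hFβ h)
  · have hset : (Finset.univ.filter fun l : (Λ : Type) => Fl q (l : F) x s = 0)
        = {(⟨α, hα⟩ : (Λ : Type)), ⟨β, hβ⟩} := by
      ext l
      simp only [Finset.mem_filter, Finset.mem_univ, true_and, Finset.mem_insert,
        Finset.mem_singleton]
      constructor
      · intro hl
        by_contra hc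
        push_neg at hc
        have h1 : α ≠ (l : F) := fun h => hc.1 (Subtype.ext h.symm)
        have h2 : β ≠ (l : F) := fun h => hc.2 (Subtype.ext h.symm)
        exact harc α hα β hβ (l : F) l.2 hαβ h1 h2
          (three_zeros q hq1 hsub hx hαβ h2 hFα hFβ hl)
      · rintro (rfl | rfl)
        · exact hFα
        · exact hFβ
    rw [hset]
    exact Finset.card_pair (fun h => hαβ (congrArg Subtype.val h))
end

section
/- The code C constructed from Hermitian forms F_λ, λ ∈ Λ, evaluated on Ω = GF(q^2) × S, is a q-ary linear [N, 3, N−2] MDS code: it is a 3-dimensional GF(q)-subspace of GF(q)^N with minimum distance N−2 = N − dim(C) + 1. -/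
set_option synthInstance.maxHeartbeats 400000

open Polynomial in
private lemma root_bound {F : Type*} [Field F] (q : ℕ) (hq2 : 2 ≤ q) (c : F)
    (s : Finset F) (h : ∀ z ∈ s, z ^ q + c * z = 0) : s.card ≤ q := by
  classical
  set p : F[X] := X ^ q + C c * X with hp
  have hpne : p ≠ 0 := by
    intro h0
    have : p.coeff q = 0 := by rw [h0]; simp
    rw [hp] at this
    simp only [coeff_add, coeff_X_pow, if_pos rfl, coeff_C_mul, coeff_X] at this
    rw [if_neg (by omega : ¬ 1 = q)] at this
    simp at this
  have hdeg : p.natDegree ≤ q := by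
    rw [hp]
    apply natDegree_add_le_of_degree_le (natDegree_X_pow_le q)
    calc (C c * X).natDegree ≤ 1 := by
          simpa using natDegree_C_mul_le c X
      _ ≤ q := by omega
  have hsub : s ⊆ p.roots.toFinset := by
    intro z hz
    rw [Multiset.mem_toFinset, mem_roots hpne]
    simp [hp, IsRoot, h z hz]
  calc s.card ≤ p.roots.toFinset.card := Finset.card_le_card hsub
    _ ≤ Multiset.card p.roots := Multiset.toFinset_card_le _
    _ ≤ p.natDegree := card_roots' p
    _ ≤ q := hdeg

private lemma root_bound' {F : Type*} [Field F] [Fintype F] (q : ℕ) (hq2 : 2 ≤ q) (c : F)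
    (P : F → Prop) (h : ∀ z, P z → z ^ q + c * z = 0) : Nat.card {z : F // P z} ≤ q := by
  classical
  rw [Nat.card_eq_fintype_card, Fintype.card_subtype]
  exact root_bound q hq2 c _ (fun z hz => h z (Finset.mem_filter.mp hz).2)

private lemma frob_add_lemma (q : ℕ) (hq : IsPrimePow q) {F : Type*} [Field F] [Fintype F]
    (hF : Fintype.card F = q ^ 2) : ∀ a b : F, (a + b) ^ q = a ^ q + b ^ q := by
  obtain ⟨p, n, hp, hn, rfl⟩ := hq
  have hpp : p.Prime := Nat.prime_iff.mpr hp
  set r := ringChar F with hr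
  haveI : CharP F r := ringChar.charP F
  obtain ⟨m, hrp, hcard⟩ := FiniteField.card F r
  have hdvd : p ∣ r ^ (m : ℕ) := by
    rw [← hcard, hF, ← pow_mul]
    exact dvd_pow_self p (by positivity)
  have hpr : p = r := ((Nat.prime_dvd_prime_iff_eq hpp hrp).mp
    (hpp.dvd_of_dvd_pow hdvd))
  haveI : CharP F p := hpr ▸ ringChar.charP F
  haveI : Fact p.Prime := ⟨hpp⟩
  intro a b
  exact add_pow_char_pow a b p n

private lemma trace_facts (q : ℕ) (hq2 : 2 ≤ q) {F : Type*} [Field F] [Fintype F]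
    (hF : Fintype.card F = q ^ 2)
    (hadd : ∀ a b : F, (a + b) ^ q = a ^ q + b ^ q) :
    (∃ t : F, t ≠ 0 ∧ t ^ q + t = 0) ∧ (∀ k : F, k ^ q = k → ∃ z : F, z ^ q + z = k)
      ∧ Nat.card {z : F // z ^ q = z} = q := by
  classical
  have hq0 : 0 < q := by omega
  set Tr : F →+ F := AddMonoidHom.mk' (fun z => z ^ q + z)
    (fun a b => by simp only [hadd]; ring) with hTr
  have hTrApp : ∀ z : F, Tr z = z ^ q + z := fun z => rfl
  have hfix : ∀ w : F, (w ^ q + w) ^ q = w ^ q + w := by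
    intro w
    have hw : (w ^ q) ^ q = w := by
      rw [← pow_mul, ← pow_two q, ← hF, FiniteField.pow_card]
    rw [hadd, hw]; ring
  have hker_le : Nat.card ↥Tr.ker ≤ q := by
    refine root_bound' q hq2 1 (· ∈ Tr.ker) (fun z hz => ?_)
    have := AddMonoidHom.mem_ker.mp hz
    rw [hTrApp] at this; rw [one_mul]; exact this
  have hrange_le : Nat.card ↥Tr.range ≤ q := by
    refine root_bound' q hq2 (-1) (· ∈ Tr.range) (fun z hz => ?_)
    obtain ⟨w, hw⟩ := AddMonoidHom.mem_range.mp hz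
    rw [hTrApp] at hw
    rw [← hw]
    rw [hfix w]; ring
  have hprod : Nat.card ↥Tr.range * Nat.card ↥Tr.ker = q ^ 2 := by
    have h1 := AddSubgroup.card_eq_card_quotient_mul_card_addSubgroup Tr.ker
    have h2 : Nat.card (F ⧸ Tr.ker) = Nat.card ↥Tr.range :=
      Nat.card_congr (QuotientAddGroup.quotientKerEquivRange Tr).toEquiv
    rw [h2] at h1
    rw [← h1, Nat.card_eq_fintype_card, hF]
  have hker_pos : 0 < Nat.card ↥Tr.ker := Nat.card_pos
  have hker_eq : Nat.card ↥Tr.ker = q := by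
    refine le_antisymm hker_le (Nat.le_of_mul_le_mul_left ?_ hq0)
    calc q * q = q ^ 2 := (pow_two q).symm
      _ = Nat.card ↥Tr.range * Nat.card ↥Tr.ker := hprod.symm
      _ ≤ q * Nat.card ↥Tr.ker := Nat.mul_le_mul_right _ hrange_le
  have hrange_eq : Nat.card ↥Tr.range = q := by
    have : Nat.card ↥Tr.range * q = q * q := by
      rw [← hker_eq]; rw [hprod, hker_eq, pow_two]
    exact Nat.eq_of_mul_eq_mul_right hq0 this
  have hsub : (Tr.range : Set F) ⊆ {z : F | z ^ q = z} := by
    intro z hz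
    obtain ⟨w, hw⟩ := AddMonoidHom.mem_range.mp hz
    rw [hTrApp] at hw
    simp only [Set.mem_setOf_eq, ← hw]
    exact hfix w
  have hKle : Set.ncard {z : F | z ^ q = z} ≤ q := by
    rw [Set.ncard_eq_toFinset_card']
    refine root_bound q hq2 (-1) _ (fun z hz => ?_)
    have := (Set.mem_toFinset.mp hz)
    simp only [Set.mem_setOf_eq] at this
    rw [this]; ring
  have hreq : Set.ncard (Tr.range : Set F) = q := by
    rw [← Nat.card_coe_set_eq]
    exact hrange_eq
  have heq : (Tr.range : Set F) = {z : F | z ^ q = z} :=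
    Set.eq_of_subset_of_ncard_le hsub (by rw [hreq]; exact hKle) (Set.toFinite _)
  refine ⟨?_, ?_, ?_⟩
  · by_contra hcon
    push_neg at hcon
    have hbot : Tr.ker = ⊥ := by
      rw [AddSubgroup.eq_bot_iff_forall]
      intro x hx
      have hx' := AddMonoidHom.mem_ker.mp hx
      rw [hTrApp] at hx'
      by_contra hne
      exact hcon x hne hx'
    rw [hbot] at hker_eq
    simp at hker_eq
    omega
  · intro k hk
    have hkmem : k ∈ (Tr.range : Set F) := by rw [heq]; exact hk
    obtain ⟨w, hw⟩ := AddMonoidHom.mem_range.mp hkmem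
    exact ⟨w, by rw [← hTrApp]; exact hw⟩
  · have : Nat.card {z : F // z ^ q = z} = Set.ncard {z : F | z ^ q = z} :=
      (Nat.card_coe_set_eq _).symm
    rw [this, ← heq, hreq]

set_option maxHeartbeats 4000000

open Classical in
/-- The code `C` constructed from the Hermitian forms `F_λ`, `λ ∈ Λ`, evaluated on
`Ω = GF(q^2) × S`, is a `q`-ary linear `[N, 3, N-2]` MDS code: a `3`-dimensional
`GF(q)`-subspace of `GF(q)^N` in which every nonzero word has Hamming weight at least
`N - 2`, with a nonzero word of weight exactly `N - 2 = N - 3 + 1`. -/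
theorem code_is_MDS (q : ℕ) (hq : IsPrimePow q)
    (F : Type) [Field F] [Fintype F] (hF : Fintype.card F = q ^ 2)
    (K : Subfield F) (hK : ∀ x : F, x ∈ K ↔ x ^ q = x)
    (S : Set F) (hS : ∀ z : F, ∃! s : F, s ∈ S ∧ (z - s) ^ q + (z - s) = 0)
    (Λ : Finset F) (hΛ : 3 ≤ Λ.card)
    (harc : ∀ α ∈ Λ, ∀ β ∈ Λ, ∀ γ ∈ Λ, α ≠ β → α ≠ γ → β ≠ γ →
      ((α - β) / (γ - β)) ^ (q - 1) ≠ 1) :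
    ∃ V : Submodule ↥K ({l : F // l ∈ Λ} → ↥K),
      (V : Set ({l : F // l ∈ Λ} → ↥K)) =
        {c | ∃ x y : F, y ∈ S ∧ ∀ l : {l : F // l ∈ Λ}, (c l : F) = Fl q l.1 x y} ∧
      Module.finrank ↥K ↥V = 3 ∧
      (∀ c ∈ V, c ≠ 0 →
        Λ.card - 2 ≤ (Finset.univ.filter fun l : {l : F // l ∈ Λ} => c l ≠ 0).card) ∧
      (∃ c ∈ V, c ≠ 0 ∧
        (Finset.univ.filter fun l : {l : F // l ∈ Λ} => c l ≠ 0).card = Λ.card - 2) := by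
  classical
  have hq2 : 2 ≤ q := hq.two_le
  have hq0 : q ≠ 0 := by omega
  have hadd := frob_add_lemma q hq hF
  obtain ⟨⟨t, ht0, htt⟩, hsurj, hKcard⟩ := trace_facts q hq2 hF hadd
  have hsub : ∀ a b : F, (a - b) ^ q = a ^ q - b ^ q := by
    intro a b
    have h := hadd (a - b) b
    rw [sub_add_cancel] at h
    exact eq_sub_of_add_eq h.symm
  have hneg : ∀ z : F, (-z) ^ q = -z ^ q := by
    intro z
    have := hsub 0 z
    simpa [zero_pow hq0] using this
  have hQ : ∀ z : F, z ^ (q * q) = z := by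
    intro z
    rw [show q * q = q ^ 2 from (pow_two q).symm, ← hF, FiniteField.pow_card]
  have hKmem : ∀ k : ↥K, (k : F) ^ q = (k : F) := fun k => (hK k).mp k.2
  have hval : ∀ (x a l : F), a ^ q = a → (l ^ q * x ^ q + l * x + a) ∈ K := by
    intro x a l ha
    rw [hK]
    have e1 : (l ^ q * x ^ q + l * x) ^ q = l * x + l ^ q * x ^ q := by
      rw [hadd, mul_pow, mul_pow, ← pow_mul, ← pow_mul, hQ, hQ]
    rw [hadd, e1, ha]; ring
  set g : F × ↥K → ({l : F // l ∈ Λ} → ↥K) := fun p l =>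
    ⟨l.1 ^ q * p.1 ^ q + l.1 * p.1 + (p.2 : F), hval p.1 p.2 l.1 (hKmem p.2)⟩ with hg
  have hgval : ∀ (x : F) (a : ↥K) (l : {l : F // l ∈ Λ}),
      ((g (x, a) l : F)) = l.1 ^ q * x ^ q + l.1 * x + (a : F) := fun _ _ _ => rfl
  -- closure
  have hzero_mem : (0 : {l : F // l ∈ Λ} → ↥K) ∈ Set.range g := by
    refine ⟨(0, 0), funext fun l => Subtype.ext ?_⟩
    rw [hgval]
    simp [zero_pow hq0]
  have hadd_mem : ∀ {a b : {l : F // l ∈ Λ} → ↥K},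
      a ∈ Set.range g → b ∈ Set.range g → a + b ∈ Set.range g := by
    rintro _ _ ⟨⟨x1, a1⟩, rfl⟩ ⟨⟨x2, a2⟩, rfl⟩
    refine ⟨(x1 + x2, a1 + a2), funext fun l => Subtype.ext ?_⟩
    have hca : (((g (x1, a1) + g (x2, a2)) l : ↥K) : F)
        = ((g (x1, a1) l : ↥K) : F) + ((g (x2, a2) l : ↥K) : F) := rfl
    rw [hgval, hca, hgval, hgval]
    push_cast
    rw [hadd x1 x2]
    ring
  have hsmul_mem : ∀ (k : ↥K) {c : {l : F // l ∈ Λ} → ↥K},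
      c ∈ Set.range g → k • c ∈ Set.range g := by
    rintro k _ ⟨⟨x, a⟩, rfl⟩
    refine ⟨((k : F) * x, k * a), funext fun l => Subtype.ext ?_⟩
    rw [hgval]
    have : ((k • g (x, a)) l : F) = (k : F) * ((g (x, a)) l : F) := rfl
    rw [this, hgval, mul_pow, hKmem k]
    push_cast
    ring
  let V : Submodule ↥K ({l : F // l ∈ Λ} → ↥K) :=
    { carrier := Set.range g
      add_mem' := hadd_mem
      zero_mem' := hzero_mem
      smul_mem' := hsmul_mem }
  have hmemV : ∀ c : {l : F // l ∈ Λ} → ↥K, c ∈ V ↔ c ∈ Set.range g := fun _ => Iff.rfl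
  -- three distinct elements of Λ
  obtain ⟨u3, hu3, hcard3⟩ := Finset.exists_subset_card_eq hΛ
  obtain ⟨m1, m2, m3, hm12, hm13, hm23, rfl⟩ := Finset.card_eq_three.mp hcard3
  have hm1 : m1 ∈ Λ := hu3 (by simp)
  have hm2 : m2 ∈ Λ := hu3 (by simp)
  have hm3 : m3 ∈ Λ := hu3 (by simp)
  -- key arc lemma
  have hkey : ∀ (x : F), x ≠ 0 → ∀ (a : F) (l1 l2 l3 : F), l1 ∈ Λ → l2 ∈ Λ → l3 ∈ Λ →
      l1 ≠ l2 → l1 ≠ l3 → l2 ≠ l3 →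
      l1 ^ q * x ^ q + l1 * x + a = 0 → l2 ^ q * x ^ q + l2 * x + a = 0 →
      l3 ^ q * x ^ q + l3 * x + a = 0 → False := by
    intro x hx a l1 l2 l3 h1 h2 h3 h12 h13 h23 e1 e2 e3
    have d1 : ((l1 - l2) * x) ^ q + (l1 - l2) * x = 0 := by
      rw [mul_pow, hsub l1 l2]; linear_combination e1 - e2
    have d2 : ((l3 - l2) * x) ^ q + (l3 - l2) * x = 0 := by
      rw [mul_pow, hsub l3 l2]; linear_combination e3 - e2
    have hu0 : (l1 - l2) * x ≠ 0 := mul_ne_zero (sub_ne_zero.mpr h12) hx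
    have hv0 : (l3 - l2) * x ≠ 0 :=
      mul_ne_zero (sub_ne_zero.mpr (fun h => h23 h.symm)) hx
    have huq : ((l1 - l2) * x) ^ q = -((l1 - l2) * x) := eq_neg_of_add_eq_zero_left d1
    have hvq : ((l3 - l2) * x) ^ q = -((l3 - l2) * x) := eq_neg_of_add_eq_zero_left d2
    have hw0 : ((l1 - l2) * x) / ((l3 - l2) * x) ≠ 0 := div_ne_zero hu0 hv0
    have hwq : (((l1 - l2) * x) / ((l3 - l2) * x)) ^ q
        = ((l1 - l2) * x) / ((l3 - l2) * x) := by
      rw [div_pow, huq, hvq, neg_div_neg_eq]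
    have hw1 : (((l1 - l2) * x) / ((l3 - l2) * x)) ^ (q - 1) = 1 := by
      have h' : (((l1 - l2) * x) / ((l3 - l2) * x)) ^ (q - 1) * (((l1 - l2) * x) / ((l3 - l2) * x))
          = 1 * (((l1 - l2) * x) / ((l3 - l2) * x)) := by
        rw [one_mul, ← pow_succ, Nat.sub_add_cancel (by omega : 1 ≤ q), hwq]
      exact mul_right_cancel₀ hw0 h'
    refine harc l1 h1 l2 h2 l3 h3 h12 h13 h23 ?_
    have hre : (l1 - l2) / (l3 - l2) = ((l1 - l2) * x) / ((l3 - l2) * x) := by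
      rw [mul_div_mul_right _ _ hx]
    rw [hre, hw1]
  -- injectivity of g
  have hginj : Function.Injective g := by
    rintro ⟨x1, a1⟩ ⟨x2, a2⟩ hgeq
    have hpt : ∀ l : {l : F // l ∈ Λ},
        l.1 ^ q * x1 ^ q + l.1 * x1 + (a1 : F) = l.1 ^ q * x2 ^ q + l.1 * x2 + (a2 : F) := by
      intro l
      rw [← hgval x1 a1 l, ← hgval x2 a2 l, hgeq]
    have hpt' : ∀ l ∈ Λ, l ^ q * (x1 - x2) ^ q + l * (x1 - x2) + ((a1 : F) - a2) = 0 := by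
      intro l hl
      rw [hsub]
      linear_combination hpt ⟨l, hl⟩
    by_cases hx : x1 - x2 = 0
    · have hx12 : x1 = x2 := sub_eq_zero.mp hx
      have ha : (a1 : F) = a2 := by
        have := hpt' m1 hm1
        rw [hx, zero_pow hq0] at this
        linear_combination this
      exact Prod.ext hx12 (Subtype.ext ha)
    · exact (hkey (x1 - x2) hx ((a1 : F) - a2) m1 m2 m3 hm1 hm2 hm3
        hm12 hm13 hm23 (hpt' m1 hm1) (hpt' m2 hm2) (hpt' m3 hm3)).elim
  -- cardinalities
  have hKq : Nat.card ↥K = q := by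
    rw [← hKcard]
    exact Nat.card_congr (Equiv.subtypeEquivRight (fun z => (hK z)))
  have hVcard : Nat.card ↥V = q ^ 3 := by
    have h1 : Nat.card ↥V = Nat.card (Set.range g) := rfl
    rw [h1, Nat.card_range_of_injective hginj, Nat.card_prod, Nat.card_eq_fintype_card, hF, hKq]
    ring
  -- zero-set size bound
  have hZle : ∀ (x : F) (a : ↥K), x ≠ 0 →
      (Finset.univ.filter (fun l : {l : F // l ∈ Λ} => g (x, a) l = 0)).card ≤ 2 := by
    intro x a hx
    by_contra hcon
    push_neg at hcon
    obtain ⟨u, hu, hcard⟩ := Finset.exists_subset_card_eq (by omega : 3 ≤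
      (Finset.univ.filter (fun l : {l : F // l ∈ Λ} => g (x, a) l = 0)).card)
    obtain ⟨l1, l2, l3, h12, h13, h23, rfl⟩ := Finset.card_eq_three.mp hcard
    have e : ∀ l : {l : F // l ∈ Λ}, l ∈ ({l1, l2, l3} : Finset _) →
        l.1 ^ q * x ^ q + l.1 * x + (a : F) = 0 := by
      intro l hl
      have h0 := (Finset.mem_filter.mp (hu hl)).2
      have h0' := congrArg Subtype.val h0
      rw [hgval] at h0'
      simpa using h0'
    exact hkey x hx (a : F) l1.1 l2.1 l3.1 l1.2 l2.2 l3.2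
      (fun h => h12 (Subtype.ext h)) (fun h => h13 (Subtype.ext h))
      (fun h => h23 (Subtype.ext h))
      (e l1 (by simp)) (e l2 (by simp)) (e l3 (by simp))
  have hsum : ∀ (x : F) (a : ↥K),
      (Finset.univ.filter (fun l : {l : F // l ∈ Λ} => g (x, a) l = 0)).card +
      (Finset.univ.filter (fun l : {l : F // l ∈ Λ} => g (x, a) l ≠ 0)).card = Λ.card := by
    intro x a
    have h := Finset.card_filter_add_card_filter_not
      (s := (Finset.univ : Finset {l : F // l ∈ Λ}))
      (p := fun l => g (x, a) l = 0)
    rw [Finset.card_univ, Fintype.card_coe] at h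
    convert h using 3
  refine ⟨V, ?_, ?_, ?_, ?_⟩
  · ext c
    simp only [SetLike.mem_coe, Set.mem_setOf_eq]
    constructor
    · rintro ⟨⟨x, a⟩, rfl⟩
      have hxq1 : (x ^ (q + 1)) ^ q = x ^ (q + 1) := by
        rw [← pow_mul, show (q + 1) * q = q * q + q by ring, pow_add, hQ]
        ring
      have hk : ((a : F) - x ^ (q + 1)) ^ q = (a : F) - x ^ (q + 1) := by
        rw [hsub, hKmem, hxq1]
      obtain ⟨z, hz⟩ := hsurj _ hk
      obtain ⟨s, ⟨hsS, hs0⟩, -⟩ := hS z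
      refine ⟨x, s, hsS, fun l => ?_⟩
      have hsq : s ^ q + s = (a : F) - x ^ (q + 1) := by
        rw [hsub] at hs0
        linear_combination hz - hs0
      rw [hgval]
      simp only [Fl]
      linear_combination -hsq
    · rintro ⟨x, y, hy, hcl⟩
      have hyq : (y ^ q) ^ q = y := by rw [← pow_mul, hQ]
      have hxq1 : (x ^ (q + 1)) ^ q = x ^ (q + 1) := by
        rw [← pow_mul, show (q + 1) * q = q * q + q by ring, pow_add, hQ]
        ring
      have hamem : (x ^ (q + 1) + y ^ q + y) ∈ K := by
        rw [hK, hadd, hadd, hxq1, hyq]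
        ring
      refine ⟨(x, ⟨_, hamem⟩), funext fun l => Subtype.ext ?_⟩
      rw [hgval, hcl l]
      simp only [Fl]
      ring
  · have hfr := Module.card_eq_pow_finrank (K := ↥K) (V := ↥V)
    rw [← Nat.card_eq_fintype_card, ← Nat.card_eq_fintype_card, hVcard, hKq] at hfr
    exact Nat.pow_right_injective hq2 hfr.symm
  · rintro c hc hc0
    obtain ⟨⟨x, a⟩, rfl⟩ := hc
    by_cases hx : x = 0
    · subst hx
      have hall : ∀ l : {l : F // l ∈ Λ}, g (0, a) l ≠ 0 := by
        intro l h0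
        apply hc0
        have ha : (a : F) = 0 := by
          have h0' := congrArg Subtype.val h0
          rw [hgval] at h0'
          simpa [zero_pow hq0] using h0'
        funext l'
        apply Subtype.ext
        rw [hgval, ha]
        simp [zero_pow hq0]
      rw [Finset.filter_true_of_mem (fun l _ => hall l), Finset.card_univ, Fintype.card_coe]
      omega
    · have h1 := hZle x a hx
      have h2 := hsum x a
      omega
  · obtain ⟨x, hxdef⟩ : ∃ x : F, x = t / (m1 - m2) := ⟨_, rfl⟩
    have hx : x ≠ 0 := by rw [hxdef]; exact div_ne_zero ht0 (sub_ne_zero.mpr hm12)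
    have hamem : (-((m1 * x) ^ q + m1 * x)) ∈ K := by
      rw [hK, hneg, hadd, ← pow_mul, hQ, add_comm]
    obtain ⟨a, haval⟩ : ∃ a : ↥K, (a : F) = -((m1 * x) ^ q + m1 * x) :=
      ⟨⟨-((m1 * x) ^ q + m1 * x), hamem⟩, rfl⟩
    have e1 : m1 ^ q * x ^ q + m1 * x + (a : F) = 0 := by
      rw [haval, mul_pow]; ring
    have hxt : (m2 - m1) * x = -t := by
      rw [hxdef]
      rw [mul_div_assoc', div_eq_iff (sub_ne_zero.mpr hm12)]
      ring
    have e2 : m2 ^ q * x ^ q + m2 * x + (a : F) = 0 := by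
      have h1 : ((m2 - m1) * x) ^ q + (m2 - m1) * x = 0 := by
        rw [hxt, hneg]
        linear_combination -htt
      rw [mul_pow, hsub] at h1
      rw [haval, mul_pow]
      linear_combination h1
    have e3 : m3 ^ q * x ^ q + m3 * x + (a : F) ≠ 0 := by
      intro h3
      exact hkey x hx (a : F) m1 m2 m3 hm1 hm2 hm3 hm12 hm13 hm23 e1 e2 h3
    have hc3 : g (x, a) ⟨m3, hm3⟩ ≠ 0 := by
      intro h0
      apply e3
      have h0' := congrArg Subtype.val h0
      rw [hgval] at h0'
      simpa using h0'
    refine ⟨g (x, a), ⟨(x, a), rfl⟩, ?_, ?_⟩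
    · intro h0
      exact hc3 (by rw [h0]; rfl)
    · have hZ2 : (Finset.univ.filter (fun l : {l : F // l ∈ Λ} => g (x, a) l = 0)).card = 2 := by
        refine le_antisymm (hZle x a hx) ?_
        have hpair : ({⟨m1, hm1⟩, ⟨m2, hm2⟩} : Finset {l : F // l ∈ Λ}) ⊆
            Finset.univ.filter (fun l : {l : F // l ∈ Λ} => g (x, a) l = 0) := by
          intro l hl
          rw [Finset.mem_insert, Finset.mem_singleton] at hl
          rw [Finset.mem_filter]
          refine ⟨Finset.mem_univ _, ?_⟩
          rcases hl with rfl | rfl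
          · exact Subtype.ext (by rw [hgval]; exact e1)
          · exact Subtype.ext (by rw [hgval]; exact e2)
        have hpc : ({⟨m1, hm1⟩, ⟨m2, hm2⟩} : Finset {l : F // l ∈ Λ}).card = 2 := by
          rw [Finset.card_insert_of_notMem (by simp [Subtype.ext_iff, hm12]),
            Finset.card_singleton]
        calc 2 = ({⟨m1, hm1⟩, ⟨m2, hm2⟩} : Finset {l : F // l ∈ Λ}).card := hpc.symm
          _ ≤ _ := Finset.card_le_card hpair
      have h2 := hsum x a
      omega
end

section
/- Let q be a prime power and Λ ⊆ GF(q^2) satisfy the arc condition. Then the common zero set in GF(q^2)² of all the forms F_λ(x,y) = x^{q+1} + y^q + y + λ^q x^q + λ x, as λ ranges over Λ with |Λ| ≥ 3, is exactly {(0, y) : y^q + y = 0}, a set of q points, and it meets Ω = GF(q^2) × S in the single point (0, y₀), where y₀ is the unique element of S with y₀^q + y₀ = 0. -/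
/-- Any set of solutions of `y^q + c y = 0` in a field has at most `q` elements. -/
lemma card_le_of_poly {F : Type*} [Field F] (q : ℕ) (hq : 1 < q) (c : F) :
    Nat.card {y : F // y ^ q + c * y = 0} ≤ q := by
  classical
  set P : Polynomial F := Polynomial.X ^ q + Polynomial.C c * Polynomial.X with hPdef
  have hP : P.natDegree = q := by
    have h1 : (Polynomial.C c * Polynomial.X : Polynomial F).natDegree < q := by
      calc (Polynomial.C c * Polynomial.X : Polynomial F).natDegree
          ≤ (Polynomial.X : Polynomial F).natDegree := Polynomial.natDegree_C_mul_le _ _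
        _ ≤ 1 := by simp
        _ < q := hq
    rw [hPdef, Polynomial.natDegree_add_eq_left_of_natDegree_lt
      (by rwa [Polynomial.natDegree_X_pow]), Polynomial.natDegree_X_pow]
  have hPne : P ≠ 0 := by
    intro h
    rw [h, Polynomial.natDegree_zero] at hP
    omega
  have hsub : {y : F | y ^ q + c * y = 0} ⊆ (P.roots.toFinset : Set F) := by
    intro y hy
    simp only [Finset.coe_sort_coe, Multiset.mem_toFinset, Finset.mem_coe,
      Polynomial.mem_roots hPne, Polynomial.IsRoot, hPdef]
    have hPne' := hPne
    rw [hPdef] at hPne'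
    simpa [hPne'] using hy
  calc Nat.card {y : F // y ^ q + c * y = 0}
      = Nat.card {y : F | y ^ q + c * y = 0} := rfl
    _ ≤ Nat.card (P.roots.toFinset : Set F) := Nat.card_mono (Set.toFinite _) hsub
    _ = P.roots.toFinset.card := by rw [Nat.card_coe_set_eq, Set.ncard_coe_finset]
    _ ≤ Multiset.card P.roots := Multiset.toFinset_card_le _
    _ ≤ P.natDegree := P.card_roots'
    _ = q := hP

/-- The common zero set of all `F_λ`, `λ ∈ Λ` (with `|Λ| ≥ 3`), is exactly
`{(0,y) : y^q + y = 0}`, a set of `q` points, and it meets `Ω = GF(q^2) × S` in a single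
point `(0, y₀)` where `y₀` is the unique element of `S` of zero trace. -/
theorem common_zero_set (q : ℕ) (hq : IsPrimePow q)
    (F : Type) [Field F] [Fintype F] (hF : Fintype.card F = q ^ 2)
    (S : Set F) (hS : ∀ z : F, ∃! s : F, s ∈ S ∧ (z - s) ^ q + (z - s) = 0)
    (Λ : Finset F) (hΛ : 3 ≤ Λ.card)
    (harc : ∀ α ∈ Λ, ∀ β ∈ Λ, ∀ γ ∈ Λ, α ≠ β → α ≠ γ → β ≠ γ →
      ((α - β) / (γ - β)) ^ (q - 1) ≠ 1) :
    (∀ x y : F, (∀ l ∈ Λ, Fl q l x y = 0) ↔ (x = 0 ∧ y ^ q + y = 0)) ∧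
    Nat.card {y : F // y ^ q + y = 0} = q ∧
    (∃! p : F × F, p.2 ∈ S ∧ ∀ l ∈ Λ, Fl q l p.1 p.2 = 0) := by
  classical
  obtain ⟨p, k, hpp, hk, rfl⟩ := hq
  have hp : p.Prime := Nat.prime_iff.mpr hpp
  haveI : Fact p.Prime := ⟨hp⟩
  set q := p ^ k with hqdef
  have hq1 : 1 < q := Nat.one_lt_pow hk.ne' hp.one_lt
  have hq0 : q ≠ 0 := by omega
  -- the characteristic of F is p
  haveI hchar : CharP F p := by
    obtain ⟨r, hr⟩ := CharP.exists F
    haveI := hr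
    obtain ⟨n, hrp, hcard⟩ := FiniteField.card F r
    have hr2 : r ^ (n : ℕ) = p ^ (k * 2) := by
      rw [← hcard, hF, hqdef, ← pow_mul]
    have hrdvd : r ∣ p ^ (k * 2) := hr2 ▸ dvd_pow_self r n.ne_zero
    have : r = p := (Nat.prime_dvd_prime_iff_eq hrp hp).mp (hrp.dvd_of_dvd_pow hrdvd)
    rwa [this] at hr
  have hfrob : ∀ a b : F, (a + b) ^ q = a ^ q + b ^ q := fun a b =>
    add_pow_char_pow a b p k
  have hnegpow : ∀ s : F, (-s) ^ q = -(s ^ q) := by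
    intro s
    have h0 := hfrob s (-s)
    rw [add_neg_cancel, zero_pow hq0] at h0
    have h1 : (-s) ^ q + s ^ q = 0 := by rw [add_comm]; exact h0.symm
    exact eq_neg_of_add_eq_zero_left h1
  have hsubpow : ∀ a b : F, (a - b) ^ q = a ^ q - b ^ q := by
    intro a b
    rw [sub_eq_add_neg, hfrob, hnegpow, sub_eq_add_neg]
  -- Part 1
  have key : ∀ x y : F, (∀ l ∈ Λ, Fl q l x y = 0) ↔ (x = 0 ∧ y ^ q + y = 0) := by
    intro x y
    constructor
    · intro h
      have h3 : 2 < Λ.card := by omega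
      obtain ⟨α, β, γ, hα, hβ, hγ, hαβ, hαγ, hβγ⟩ := Finset.two_lt_card_iff.mp h3
      have hx : x = 0 := by
        by_contra hx
        have pair : ∀ l ∈ Λ, ∀ m ∈ Λ, ((l - m) * x) ^ q = -((l - m) * x) := by
          intro l hl m hm
          have h1 := h l hl
          have h2 := h m hm
          unfold Fl at h1 h2
          rw [mul_pow, hsubpow]
          linear_combination h1 - h2
        have h1 := pair α hα β hβ
        have h2 := pair γ hγ β hβ
        set t1 := (α - β) * x with ht1
        set t2 := (γ - β) * x with ht2
        have ht2ne : t2 ≠ 0 := mul_ne_zero (sub_ne_zero.mpr hβγ.symm) hx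
        have hαβ' : (α - β) ≠ 0 := sub_ne_zero.mpr hαβ
        have hγβ' : (γ - β) ≠ 0 := sub_ne_zero.mpr hβγ.symm
        have hrr : (α - β) / (γ - β) = t1 / t2 := by
          rw [ht1, ht2, mul_div_mul_right _ _ hx]
        have hrq : ((α - β) / (γ - β)) ^ q = (α - β) / (γ - β) := by
          rw [hrr, div_pow, h1, h2, neg_div_neg_eq]
        have hrne : (α - β) / (γ - β) ≠ 0 := div_ne_zero hαβ' hγβ'
        have hfix : ((α - β) / (γ - β)) ^ (q - 1) = 1 := by
          have hsucc : q = (q - 1) + 1 := by omega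
          rw [hsucc, pow_succ] at hrq
          have h' : ((α - β) / (γ - β)) ^ (q - 1) * ((α - β) / (γ - β)) =
              1 * ((α - β) / (γ - β)) := by rw [one_mul]; exact hrq
          exact mul_right_cancel₀ hrne h'
        exact harc α hα β hβ γ hγ hαβ hαγ hβγ hfix
      refine ⟨hx, ?_⟩
      have h1 := h α hα
      rw [hx] at h1
      unfold Fl at h1
      rw [zero_pow (by omega : q + 1 ≠ 0), zero_pow hq0] at h1
      linear_combination h1
    · rintro ⟨rfl, hy⟩ l hl
      unfold Fl
      rw [zero_pow (by omega : q + 1 ≠ 0), zero_pow hq0]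
      linear_combination hy
  refine ⟨key, ?_, ?_⟩
  -- Part 2: the kernel has exactly q elements
  · set φ : F →+ F := AddMonoidHom.mk' (fun y => y ^ q + y)
      (fun a b => by simp only [hfrob a b]; ring) with hφdef
    have hφ : ∀ y : F, φ y = y ^ q + y := fun y => rfl
    have hkerset : Nat.card {y : F // y ^ q + y = 0} = Nat.card φ.ker := by
      apply Nat.card_congr
      exact Equiv.subtypeEquivRight fun y => by
        simp [AddMonoidHom.mem_ker, hφ]
    have hub : Nat.card φ.ker ≤ q := by
      rw [← hkerset]
      have := card_le_of_poly q hq1 (1 : F)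
      calc Nat.card {y : F // y ^ q + y = 0}
          = Nat.card {y : F // y ^ q + (1 : F) * y = 0} :=
            Nat.card_congr (Equiv.subtypeEquivRight fun y => by rw [one_mul])
        _ ≤ q := this
    have hrange : Nat.card φ.range ≤ q := by
      have hmap : ∀ z : φ.range, (z : F) ^ q + (-1 : F) * (z : F) = 0 := by
        rintro ⟨z, y, rfl⟩
        have hz : φ y = y ^ q + y := hφ y
        simp only [hz]
        have hyq : (y ^ q + y) ^ q = y + y ^ q := by
          rw [hfrob, ← pow_mul]
          have : q * q = Fintype.card F := by rw [hF]; ring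
          rw [this, FiniteField.pow_card]
        rw [hyq]; ring
      have hinj : Function.Injective
          (fun z : φ.range => (⟨z.1, hmap z⟩ : {z : F // z ^ q + (-1 : F) * z = 0})) := by
        intro a b hab
        simp only [Subtype.mk.injEq] at hab
        exact Subtype.ext hab
      calc Nat.card φ.range
          ≤ Nat.card {z : F // z ^ q + (-1 : F) * z = 0} :=
            Nat.card_le_card_of_injective _ hinj
        _ ≤ q := card_le_of_poly q hq1 (-1 : F)
    have hsplit : Nat.card F = Nat.card (F ⧸ φ.ker) * Nat.card φ.ker :=
      AddSubgroup.card_eq_card_quotient_mul_card_addSubgroup φ.ker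
    have hquot : Nat.card (F ⧸ φ.ker) = Nat.card φ.range :=
      Nat.card_congr (QuotientAddGroup.quotientKerEquivRange φ).toEquiv
    have hcardF : Nat.card F = q ^ 2 := by rw [Nat.card_eq_fintype_card, hF]
    have hlb : q ≤ Nat.card φ.ker := by
      by_contra hlt
      push_neg at hlt
      have : Nat.card F < q * q := by
        rw [hsplit, hquot]
        calc Nat.card φ.range * Nat.card φ.ker ≤ q * Nat.card φ.ker :=
              Nat.mul_le_mul_right _ hrange
          _ < q * q := mul_lt_mul_of_pos_left hlt (by omega : 0 < q)
      rw [hcardF] at this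
      nlinarith
    rw [hkerset]
    omega
  -- Part 3: unique point in Ω
  · obtain ⟨s₀, ⟨hs₀S, hs₀⟩, huniq⟩ := hS 0
    have hs₀' : s₀ ^ q + s₀ = 0 := by
      rw [zero_sub, hnegpow] at hs₀
      linear_combination -hs₀
    refine ⟨(0, s₀), ⟨hs₀S, ?_⟩, ?_⟩
    · exact (key 0 s₀).mpr ⟨rfl, hs₀'⟩
    · rintro ⟨x, y⟩ ⟨hyS, hzero⟩
      obtain ⟨hx0, hy0⟩ := (key x y).mp hzero
      have hy : y = s₀ := by
        apply huniq
        refine ⟨hyS, ?_⟩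
        rw [zero_sub, hnegpow]
        linear_combination -hy0
      simp [hx0, hy]
end
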